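/- Let G be a finite group, p a prime, and let A be a subgroup of maximum order among the self-centralizing subgroups of G. If |G : A| = p^2 and |G : Z(G)| = p^3, then CD(G) = {Z(G), G}. -/

import Mathlib

/-- The Chermak-Delgado measure of a subgroup `H` of `G`: `|H| · |C_G(H)|`. -/
noncomputable def cdMeasure (G : Type*) [Group G] (H : Subgroup G) : ℕ :=
  Nat.card H * Nat.card (Subgroup.centralizer (H : Set G))

/-- The Chermak-Delgado lattice of `G`: the set of subgroups whose
Chermak-Delgado measure is maximal. -/
def CD (G : Type*) [Group G] : Set (Subgroup G) :=
  {H : Subgroup G | ∀ K : Subgroup G, cdMeasure G K ≤ cdMeasure G H}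

namespace CDAux

open Subgroup

variable {G : Type*} [Group G]

/-- `Cnt H` is the centralizer of `H` as a subgroup. -/
def Cnt (H : Subgroup G) : Subgroup G := Subgroup.centralizer (H : Set G)

lemma le_cc (H : Subgroup G) : H ≤ Cnt (Cnt H) := le_centralizer_iff.mpr le_rfl

lemma ccc (H : Subgroup G) : Cnt (Cnt (Cnt H)) = Cnt H :=
  le_antisymm (centralizer_le (le_cc H)) (le_cc _)

lemma center_le_cnt (H : Subgroup G) : center G ≤ Cnt H := center_le_centralizer _

lemma cnt_center : Cnt (center G) = ⊤ :=
  centralizer_eq_top_iff_subset.mpr subset_rfl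

lemma cnt_top : Cnt (⊤ : Subgroup G) = center G := by
  rw [Cnt, coe_top, centralizer_univ]

lemma cnt_le_normalizer (L : Subgroup G) : Cnt L ≤ normalizer (L : Set G) := by
  intro x hx
  rw [mem_normalizer_iff]
  intro n
  constructor
  · intro hn
    have h1 : n * x = x * n := hx n hn
    have : x * n * x⁻¹ = n := by rw [← h1, mul_inv_cancel_right]
    rwa [this]
  · intro hn
    have h1 : (x * n * x⁻¹) * x = x * (x * n * x⁻¹) := hx _ hn
    have h2 : x * n = x * (x * n * x⁻¹) := by rw [← h1, inv_mul_cancel_right]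
    have h3 : n = x * n * x⁻¹ := mul_left_cancel h2
    rwa [← h3] at hn

lemma card_mul_relIndex {N B : Subgroup G} (h : N ≤ B) :
    Nat.card N * N.relIndex B = Nat.card B := by
  have h1 := Subgroup.card_mul_index (N.subgroupOf B)
  rwa [Nat.card_congr (subgroupOfEquivOfLe h).toEquiv] at h1

lemma comm_of_relIndex_prime {p : ℕ} (hp : p.Prime) (K : Subgroup G)
    (h : (K ⊓ Cnt K).relIndex K = p) : K ≤ Cnt K := by
  haveI : Fact p.Prime := ⟨hp⟩
  set N : Subgroup ↥K := (K ⊓ Cnt K).subgroupOf K with hN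
  have hle : N ≤ Subgroup.center ↥K := by
    rintro ⟨x, hxK⟩ hx
    rw [hN, Subgroup.mem_subgroupOf] at hx
    rw [Subgroup.mem_center_iff]
    rintro ⟨y, hy⟩
    exact Subtype.ext (hx.2 y hy)
  haveI : N.Normal := ⟨fun n hn g => by
    have h1 : g * n = n * g := Subgroup.mem_center_iff.mp (hle hn) g
    rwa [show g * n * g⁻¹ = n by rw [h1, mul_inv_cancel_right]]⟩
  haveI : IsCyclic (↥K ⧸ N) :=
    isCyclic_of_prime_card (p := p) (by rw [← Subgroup.index_eq_card]; exact h)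
  intro x hx
  refine Subgroup.mem_centralizer_iff.mpr fun y hy => ?_
  exact congrArg Subtype.val
    (commutative_of_cyclic_center_quotient (QuotientGroup.mk' N)
      (by rw [QuotientGroup.ker_mk']; exact hle) ⟨y, hy⟩ ⟨x, hx⟩)

lemma prod_le [Finite G] (B L : Subgroup G) (hB : Cnt L = B) (hL : Cnt B = L) :
    Nat.card B * Nat.card L ≤ Nat.card ↥(B ⊓ L) * Nat.card (Cnt (B ⊓ L)) := by
  have hBnorm : B ≤ normalizer (L : Set G) := hB ▸ cnt_le_normalizer L
  have hLT : L ≤ B ⊔ L := le_sup_right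
  have hBT : B ≤ B ⊔ L := le_sup_left
  haveI : (L.subgroupOf (B ⊔ L)).Normal := by
    rw [normal_subgroupOf_iff hLT]
    intro h k hh hk
    have hkN : k ∈ normalizer (L : Set G) := (sup_le hBnorm (le_normalizer : L ≤ normalizer (L : Set G))) hk
    exact (Subgroup.mem_normalizer_iff.mp hkN h).mp hh
  have key : L.relIndex (B ⊔ L) = L.relIndex B := by
    have h1 := Subgroup.relIndex_sup_right (B.subgroupOf (B ⊔ L)) (L.subgroupOf (B ⊔ L))
    rw [← subgroupOf_sup hBT hLT, subgroupOf_self, relIndex_top_right,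
      relIndex_subgroupOf hBT] at h1
    exact h1
  have hBc : B ≤ Cnt (B ⊓ L) := hB ▸ centralizer_le (SetLike.coe_subset_coe.mpr inf_le_right)
  have hLc : L ≤ Cnt (B ⊓ L) := hL ▸ centralizer_le (SetLike.coe_subset_coe.mpr inf_le_left)
  calc Nat.card B * Nat.card L
      = (Nat.card ↥(B ⊓ L) * (B ⊓ L).relIndex B) * Nat.card L := by
        rw [card_mul_relIndex inf_le_left]
    _ = Nat.card ↥(B ⊓ L) * (Nat.card L * L.relIndex (B ⊔ L)) := by
        rw [inf_relIndex_left, key]; ring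
    _ = Nat.card ↥(B ⊓ L) * Nat.card ↥(B ⊔ L) := by rw [card_mul_relIndex hLT]
    _ ≤ Nat.card ↥(B ⊓ L) * Nat.card (Cnt (B ⊓ L)) :=
        Nat.mul_le_mul_left _ (card_le_of_le (sup_le hBc hLc))

end CDAux

open Subgroup CDAux

theorem stmt_3 (G : Type*) [Group G] [Finite G] (p : ℕ) (hp : p.Prime)
    (A : Subgroup G) (hA : Subgroup.centralizer (A : Set G) = A)
    (hAmax : ∀ B : Subgroup G, Subgroup.centralizer (B : Set G) = B →
      Nat.card B ≤ Nat.card A)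
    (hiA : A.index = p ^ 2) (hZ : (Subgroup.center G).index = p ^ 3) :
    CD G = {Subgroup.center G, ⊤} := by
  have hp1 : 1 < p := hp.one_lt
  have hposG : 0 < Nat.card G := Nat.card_pos
  have hZpos : 0 < Nat.card (center G) := Nat.card_pos
  have hidx : ∀ H : Subgroup G, center G ≤ H → ∃ i ≤ 3, H.index = p ^ i := by
    intro H hH
    exact (Nat.dvd_prime_pow hp).mp (hZ ▸ index_dvd_of_le hH)
  have cZ : Nat.card (center G) * p ^ 3 = Nat.card G := by
    rw [← hZ]; exact Subgroup.card_mul_index _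
  -- the abelian case
  have habel : ∀ M : Subgroup G, M ≤ Cnt M → Cnt (Cnt M) = M →
      Nat.card M * Nat.card (Cnt M) ≤ Nat.card G * Nat.card (center G) ∧
      (Nat.card M * Nat.card (Cnt M) = Nat.card G * Nat.card (center G) → M = center G) := by
    intro M h1 h2
    have hZM : center G ≤ M := h2 ▸ center_le_cnt (Cnt M)
    obtain ⟨i, hi3, hi⟩ := hidx M hZM
    obtain ⟨j, hj3, hj⟩ := hidx (Cnt M) (center_le_cnt M)
    have cM : Nat.card M * p ^ i = Nat.card G := by
      rw [← hi]; exact Subgroup.card_mul_index _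
    have cL : Nat.card (Cnt M) * p ^ j = Nat.card G := by
      rw [← hj]; exact Subgroup.card_mul_index _
    have hMpos : 0 < Nat.card M := Nat.card_pos
    have hLpos : 0 < Nat.card (Cnt M) := Nat.card_pos
    have hji : j ≤ i := by
      have hcard : Nat.card M ≤ Nat.card (Cnt M) := Subgroup.card_le_of_le h1
      have h3 : Nat.card (Cnt M) * p ^ j ≤ Nat.card (Cnt M) * p ^ i := by
        rw [cL, ← cM]
        exact Nat.mul_le_mul_right _ hcard
      exact (pow_le_pow_iff_right₀ hp1).mp (Nat.le_of_mul_le_mul_left h3 hLpos)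
    have hjzero : j = 0 → M = center G ∧ i = 3 := by
      intro hj0
      have htop : Cnt M = ⊤ := index_eq_one.mp (by rw [hj, hj0, pow_zero])
      have hMc : M = center G := by rw [← h2, htop, cnt_top]
      refine ⟨hMc, ?_⟩
      have h7 : p ^ i = p ^ 3 := by rw [← hi, hMc, hZ]
      exact Nat.pow_right_injective hp.two_le h7
    have hself : i = j → 2 ≤ i := by
      intro hij
      have hcc : Nat.card (Cnt M) * p ^ i = Nat.card M * p ^ i := by
        rw [cM, ← cL, hij]
      have hMC : M = Cnt M := Subgroup.eq_of_le_of_card_ge h1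
        (le_of_eq (Nat.eq_of_mul_eq_mul_right (pow_pos hp.pos i) hcc))
      have hAM := hAmax M hMC.symm
      have cA : Nat.card A * p ^ 2 = Nat.card G := by
        rw [← hiA]; exact Subgroup.card_mul_index _
      have h4 : Nat.card M * p ^ 2 ≤ Nat.card M * p ^ i := by
        calc Nat.card M * p ^ 2 ≤ Nat.card A * p ^ 2 := Nat.mul_le_mul_right _ hAM
          _ = Nat.card G := cA
          _ = Nat.card M * p ^ i := cM.symm
      exact (pow_le_pow_iff_right₀ hp1).mp (Nat.le_of_mul_le_mul_left h4 hMpos)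
    have h3le : 3 ≤ i + j := by
      by_contra hlt
      push_neg at hlt
      rcases Nat.eq_zero_or_pos j with hj0 | hjpos
      · obtain ⟨_, hi3'⟩ := hjzero hj0; omega
      · have hij : i = j := by omega
        have := hself hij; omega
    have e1 : (Nat.card M * Nat.card (Cnt M)) * (p ^ i * p ^ j) = Nat.card G * Nat.card G := by
      calc (Nat.card M * Nat.card (Cnt M)) * (p ^ i * p ^ j)
          = (Nat.card M * p ^ i) * (Nat.card (Cnt M) * p ^ j) := by ring
        _ = Nat.card G * Nat.card G := by rw [cM, cL]
    have e2 : (Nat.card G * Nat.card (center G)) * p ^ 3 = Nat.card G * Nat.card G := by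
      calc (Nat.card G * Nat.card (center G)) * p ^ 3
          = Nat.card G * (Nat.card (center G) * p ^ 3) := by ring
        _ = Nat.card G * Nat.card G := by rw [cZ]
    have hle : Nat.card M * Nat.card (Cnt M) ≤ Nat.card G * Nat.card (center G) := by
      have h5 : (Nat.card M * Nat.card (Cnt M)) * (p ^ i * p ^ j) ≤
          (Nat.card G * Nat.card (center G)) * (p ^ i * p ^ j) := by
        calc (Nat.card M * Nat.card (Cnt M)) * (p ^ i * p ^ j)
            = Nat.card G * Nat.card G := e1
          _ = (Nat.card G * Nat.card (center G)) * p ^ 3 := e2.symm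
          _ ≤ (Nat.card G * Nat.card (center G)) * (p ^ i * p ^ j) := by
              refine Nat.mul_le_mul_left _ ?_
              rw [← pow_add]
              exact Nat.pow_le_pow_right hp.pos h3le
      exact Nat.le_of_mul_le_mul_right h5 (Nat.mul_pos (pow_pos hp.pos i) (pow_pos hp.pos j))
    refine ⟨hle, ?_⟩
    intro heq
    have hij3 : i + j = 3 := by
      have h6 : (Nat.card G * Nat.card (center G)) * (p ^ i * p ^ j) =
          (Nat.card G * Nat.card (center G)) * p ^ 3 := by
        rw [← heq, e1, heq, e2]
      have h7 : p ^ i * p ^ j = p ^ 3 :=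
        Nat.eq_of_mul_eq_mul_left (Nat.mul_pos hposG hZpos) h6
      rw [← pow_add] at h7
      exact Nat.pow_right_injective hp.two_le h7
    rcases Nat.eq_zero_or_pos j with hj0 | hjpos
    · exact (hjzero hj0).1
    · exfalso
      have hj1 : j = 1 := by
        by_contra hne
        have hij : i = j := by omega
        have := hself hij; omega
      have hi2 : i = 2 := by omega
      have hinf : (Cnt M) ⊓ Cnt (Cnt M) = M := by
        rw [h2]; exact inf_eq_right.mpr h1
      have hrel : ((Cnt M) ⊓ Cnt (Cnt M)).relIndex (Cnt M) = p := by
        rw [hinf]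
        have h8 := relIndex_mul_index h1
        rw [hi, hj, hi2, hj1, pow_one] at h8
        have h8' : M.relIndex (Cnt M) * p = p * p := by
          rw [h8]; ring
        exact Nat.eq_of_mul_eq_mul_right hp.pos h8'
      have h9 := comm_of_relIndex_prime hp (Cnt M) hrel
      rw [h2] at h9
      have h10 : Nat.card (Cnt M) ≤ Nat.card M := Subgroup.card_le_of_le h9
      have h11 : Nat.card M * p ^ 2 ≤ Nat.card M * p ^ 1 := by
        calc Nat.card M * p ^ 2 = Nat.card G := by rw [← hi2, cM]
          _ = Nat.card (Cnt M) * p ^ 1 := by rw [← hj1, cL]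
          _ ≤ Nat.card M * p ^ 1 := Nat.mul_le_mul_right _ h10
      have := (pow_le_pow_iff_right₀ hp1).mp (Nat.le_of_mul_le_mul_left h11 hMpos)
      omega
  -- the global bound
  have hbound : ∀ K : Subgroup G, cdMeasure G K ≤ Nat.card G * Nat.card (center G) := by
    intro K
    have hCB : Cnt (Cnt (Cnt K)) = Cnt K := ccc K
    have step1 : cdMeasure G K ≤ Nat.card (Cnt (Cnt K)) * Nat.card (Cnt K) := by
      show Nat.card K * Nat.card (Cnt K) ≤ _
      exact Nat.mul_le_mul_right _ (Subgroup.card_le_of_le (le_cc K))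
    have step2 := prod_le (Cnt (Cnt K)) (Cnt K) rfl hCB
    set N := Cnt (Cnt K) ⊓ Cnt K with hNdef
    have hNc : N ≤ Cnt N := by
      intro x hx
      refine Subgroup.mem_centralizer_iff.mpr fun y hy => ?_
      exact hx.1 y hy.2
    have hMc2 : Cnt (Cnt (Cnt N)) = Cnt N := ccc N
    have hMc1 : Cnt (Cnt N) ≤ Cnt N := centralizer_le (SetLike.coe_subset_coe.mpr hNc)
    have step3 : Nat.card N * Nat.card (Cnt N) ≤
        Nat.card (Cnt (Cnt N)) * Nat.card (Cnt (Cnt (Cnt N))) := by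
      rw [hMc2]
      exact Nat.mul_le_mul_right _ (Subgroup.card_le_of_le (le_cc N))
    have step4 := (habel (Cnt (Cnt N)) (by rw [hMc2]; exact hMc1) (by rw [hMc2])).1
    exact step1.trans (step2.trans (step3.trans step4))
  have hmZ : cdMeasure G (center G) = Nat.card G * Nat.card (center G) := by
    show Nat.card (center G) * Nat.card (Cnt (center G)) = _
    rw [cnt_center, Subgroup.card_top, Nat.mul_comm]
  have hmT : cdMeasure G (⊤ : Subgroup G) = Nat.card G * Nat.card (center G) := by
    show Nat.card (⊤ : Subgroup G) * Nat.card (Cnt (⊤ : Subgroup G)) = _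
    rw [cnt_top, Subgroup.card_top]
  have hforward : ∀ H : Subgroup G, (∀ K, cdMeasure G K ≤ cdMeasure G H) →
      H = center G ∨ H = ⊤ := by
    intro H hH
    have hHeq : cdMeasure G H = Nat.card G * Nat.card (center G) :=
      le_antisymm (hbound H) (hmZ ▸ hH (center G))
    have hCB : Cnt (Cnt (Cnt H)) = Cnt H := ccc H
    have step1 : cdMeasure G H ≤ Nat.card (Cnt (Cnt H)) * Nat.card (Cnt H) := by
      show Nat.card H * Nat.card (Cnt H) ≤ _
      exact Nat.mul_le_mul_right _ (Subgroup.card_le_of_le (le_cc H))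
    have step2 := prod_le (Cnt (Cnt H)) (Cnt H) rfl hCB
    set N := Cnt (Cnt H) ⊓ Cnt H with hNdef
    have hNc : N ≤ Cnt N := by
      intro x hx
      refine Subgroup.mem_centralizer_iff.mpr fun y hy => ?_
      exact hx.1 y hy.2
    have hMc2 : Cnt (Cnt (Cnt N)) = Cnt N := ccc N
    have hMc1 : Cnt (Cnt N) ≤ Cnt N := centralizer_le (SetLike.coe_subset_coe.mpr hNc)
    have step3 : Nat.card N * Nat.card (Cnt N) ≤
        Nat.card (Cnt (Cnt N)) * Nat.card (Cnt (Cnt (Cnt N))) := by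
      rw [hMc2]
      exact Nat.mul_le_mul_right _ (Subgroup.card_le_of_le (le_cc N))
    have habelM := habel (Cnt (Cnt N)) (by rw [hMc2]; exact hMc1) (by rw [hMc2])
    have eX3 : Nat.card (Cnt (Cnt N)) * Nat.card (Cnt (Cnt (Cnt N))) =
        Nat.card G * Nat.card (center G) :=
      le_antisymm habelM.1 (by rw [← hHeq]; exact step1.trans (step2.trans step3))
    have hMZ : Cnt (Cnt N) = center G := habelM.2 eX3
    have hNZ : N = center G :=
      le_antisymm (hMZ ▸ le_cc N) (le_inf (center_le_cnt _) (center_le_cnt _))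
    have eX1 : Nat.card (Cnt (Cnt H)) * Nat.card (Cnt H) = Nat.card G * Nat.card (center G) :=
      le_antisymm (step2.trans (step3.trans habelM.1)) (by rw [← hHeq]; exact step1)
    have hHB : H = Cnt (Cnt H) := by
      refine Subgroup.eq_of_le_of_card_ge (le_cc H) ?_
      have h12 : Nat.card (Cnt (Cnt H)) * Nat.card (Cnt H) =
          Nat.card H * Nat.card (Cnt H) := eX1.trans hHeq.symm
      exact le_of_eq (Nat.eq_of_mul_eq_mul_right Nat.card_pos h12)
    have hinfHZ : H ⊓ Cnt H = center G := by rw [hHB, hCB]; exact hNZ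
    have hZH : center G ≤ H := by
      have h0 : H ⊓ Cnt H ≤ H := inf_le_left
      rwa [hinfHZ] at h0
    obtain ⟨i, hi3, hi⟩ := hidx H hZH
    obtain ⟨j, hj3, hj⟩ := hidx (Cnt H) (center_le_cnt H)
    have cH : Nat.card H * p ^ i = Nat.card G := by
      rw [← hi]; exact Subgroup.card_mul_index _
    have cL : Nat.card (Cnt H) * p ^ j = Nat.card G := by
      rw [← hj]; exact Subgroup.card_mul_index _
    have hij3 : i + j = 3 := by
      have e1 : (Nat.card H * Nat.card (Cnt H)) * (p ^ i * p ^ j) =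
          Nat.card G * Nat.card G := by
        calc (Nat.card H * Nat.card (Cnt H)) * (p ^ i * p ^ j)
            = (Nat.card H * p ^ i) * (Nat.card (Cnt H) * p ^ j) := by ring
          _ = Nat.card G * Nat.card G := by rw [cH, cL]
      have e2 : (Nat.card G * Nat.card (center G)) * p ^ 3 = Nat.card G * Nat.card G := by
        calc (Nat.card G * Nat.card (center G)) * p ^ 3
            = Nat.card G * (Nat.card (center G) * p ^ 3) := by ring
          _ = Nat.card G * Nat.card G := by rw [cZ]
      have hHeq' : Nat.card H * Nat.card (Cnt H) = Nat.card G * Nat.card (center G) := hHeq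
      have h6 : (Nat.card G * Nat.card (center G)) * (p ^ i * p ^ j) =
          (Nat.card G * Nat.card (center G)) * p ^ 3 := by
        rw [← hHeq', e1, hHeq', e2]
      have h7 : p ^ i * p ^ j = p ^ 3 :=
        Nat.eq_of_mul_eq_mul_left (Nat.mul_pos hposG hZpos) h6
      rw [← pow_add] at h7
      exact Nat.pow_right_injective hp.two_le h7
    interval_cases i
    · -- i = 0 : H = ⊤
      right
      exact index_eq_one.mp (by rw [hi, pow_zero])
    · -- i = 1, j = 2
      exfalso
      have hj2 : j = 2 := by omega
      have hinfL : Cnt H ⊓ Cnt (Cnt H) = center G := by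
        rw [← hHB, inf_comm]; exact hinfHZ
      have hrel : (Cnt H ⊓ Cnt (Cnt H)).relIndex (Cnt H) = p := by
        rw [hinfL]
        have h8 := relIndex_mul_index (center_le_cnt H)
        rw [hj, hj2, hZ] at h8
        have h8' : (center G).relIndex (Cnt H) * p ^ 2 = p * p ^ 2 := by
          rw [h8]; ring
        exact Nat.eq_of_mul_eq_mul_right (pow_pos hp.pos 2) h8'
      have h9 := comm_of_relIndex_prime hp (Cnt H) hrel
      rw [← hHB] at h9
      have hLZ : Cnt H = center G := by
        rw [← hinfHZ]; exact (inf_eq_right.mpr h9).symm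
      rw [hLZ, hj2] at cL
      have h7 : p ^ 2 = p ^ 3 :=
        Nat.eq_of_mul_eq_mul_left hZpos (cL.trans cZ.symm)
      have := Nat.pow_right_injective hp.two_le h7
      omega
    · -- i = 2, j = 1
      exfalso
      have hrel : (H ⊓ Cnt H).relIndex H = p := by
        rw [hinfHZ]
        have h8 := relIndex_mul_index hZH
        rw [hi, hZ] at h8
        have h8' : (center G).relIndex H * p ^ 2 = p * p ^ 2 := by
          rw [h8]; ring
        exact Nat.eq_of_mul_eq_mul_right (pow_pos hp.pos 2) h8'
      have h9 := comm_of_relIndex_prime hp H hrel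
      have hHZ : H = center G := by
        rw [← hinfHZ]; exact (inf_eq_left.mpr h9).symm
      rw [hHZ] at cH
      have h7 : p ^ 2 = p ^ 3 :=
        Nat.eq_of_mul_eq_mul_left hZpos (cH.trans cZ.symm)
      have := Nat.pow_right_injective hp.two_le h7
      omega
    · -- i = 3 : H = center
      left
      have h12 : Nat.card H * p ^ 3 = Nat.card (center G) * p ^ 3 := by rw [cH, cZ]
      exact (Subgroup.eq_of_le_of_card_ge hZH
        (le_of_eq (Nat.eq_of_mul_eq_mul_right (pow_pos hp.pos 3) h12))).symm
  ext H
  simp only [CD, Set.mem_setOf_eq, Set.mem_insert_iff, Set.mem_singleton_iff]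
  constructor
  · exact hforward H
  · rintro (rfl | rfl) K
    · rw [hmZ]; exact hbound K
    · rw [hmT]; exact hbound K
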